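/- A sequence of vertices P is a directed s-t path in G_φ if and only if there exist k ∈ {1,…,n} and ε : {1,…,n} → {true,false} such that P = (s, w₁¹, …, w_k¹, w_k², w_{k+1}², …, wₙ², t), where wᵢˡ = tᵢˡ if ε(i) = true and wᵢˡ = fᵢˡ if ε(i) = false. Moreover this correspondence is a bijection between {1,…,n} × {true,false}^{{1,…,n}} and the set of directed s-t paths of G_φ; in particular, every directed s-t path in G_φ contains exactly one bridge edge. -/

import Mathlib

/-- Vertices of the graph `G_φ`: source `s`, sink `t`, and for each variable index
`i ∈ {1,…,n}` the four vertices `tᵢ¹, tᵢ², fᵢ¹, fᵢ²`.  Here `Vtx.mid i second isTrue`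
is `tᵢ` if `isTrue = true`, `fᵢ` if `isTrue = false`; superscript `2` iff `second = true`. -/
inductive Vtx (n : ℕ) : Type where
  | s : Vtx n
  | t : Vtx n
  | mid (i : Fin n) (second : Bool) (isTrue : Bool) : Vtx n
deriving DecidableEq

/-- The directed edges of `G_φ`. -/
def GEdge (n : ℕ) : Vtx n → Vtx n → Prop :=
  fun a b =>
    match a, b with
    | .s, .mid i false _ => (i : ℕ) = 0
    | .mid i false _, .mid j false _ => (j : ℕ) = (i : ℕ) + 1
    | .mid i true _, .mid j true _ => (j : ℕ) = (i : ℕ) + 1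
    | .mid i false v, .mid j true w => j = i ∧ w = v
    | .mid i true _, .t => (i : ℕ) = n - 1
    | _, _ => False

/-- Whether `(a, b)` is a bridge edge, i.e. of the form `(tᵢ¹,tᵢ²)` or `(fᵢ¹,fᵢ²)`. -/
def isBridgeB (n : ℕ) : Vtx n → Vtx n → Bool
  | .mid i false v, .mid j true w => i == j && v == w
  | _, _ => false

/-- A directed `s`-`t` path in `G_φ`: consecutive pairs are edges, vertices are
pairwise distinct, the first vertex is `s` and the last is `t`. -/
def isSTPath (n : ℕ) (P : List (Vtx n)) : Prop :=
  P.Chain' (GEdge n) ∧ P.Nodup ∧ P.head? = some Vtx.s ∧ P.getLast? = some Vtx.t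

/-- The canonical `s`-`t` path determined by a bridge position `k` and a choice
`ε i ∈ {t, f}` for every index: `s, w₁¹, …, w_k¹, w_k², …, wₙ², t`. -/
def pathOf (n : ℕ) (k : Fin n) (ε : Fin n → Bool) : List (Vtx n) :=
  Vtx.s ::
    ((((List.finRange n).filter fun i => decide (i.val ≤ k.val)).map
        fun i => Vtx.mid i false (ε i)) ++
     (((List.finRange n).filter fun i => decide (k.val ≤ i.val)).map
        fun i => Vtx.mid i true (ε i)) ++
     [Vtx.t])


namespace StAux

/-- second segment: `mid j true, mid (j+1) true, …, mid (n-1) true, t`. -/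
def seg2 (n : ℕ) (ε : Fin n → Bool) (j : ℕ) : List (Vtx n) :=
  if h : j < n then Vtx.mid ⟨j, h⟩ true (ε ⟨j, h⟩) :: seg2 n ε (j+1) else [Vtx.t]
termination_by n - j

/-- first segment followed by the second: `mid j false, …, mid k false, seg2 k`. -/
def seg1 (n : ℕ) (ε : Fin n → Bool) (j k : ℕ) : List (Vtx n) :=
  if h : j < n ∧ j ≤ k then Vtx.mid ⟨j, h.1⟩ false (ε ⟨j, h.1⟩) :: seg1 n ε (j+1) k
  else seg2 n ε k
termination_by k + 1 - j
decreasing_by omega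

theorem seg2_eq (n : ℕ) (ε : Fin n → Bool) (j : ℕ) :
    seg2 n ε j = (((List.finRange n).drop j).map fun i => Vtx.mid i true (ε i)) ++ [Vtx.t] := by
  rw [seg2]
  by_cases h : j < n
  · rw [dif_pos h, List.drop_eq_getElem_cons (by simpa using h), List.getElem_finRange,
      List.map_cons, seg2_eq n ε (j+1)]
    rfl
  · rw [dif_neg h, List.drop_eq_nil_of_le (by simpa using Nat.le_of_not_lt h)]
    rfl
termination_by n - j

theorem seg1_eq (n : ℕ) (ε : Fin n → Bool) (j k : ℕ) (hk : k < n) (hj : j ≤ k) :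
    seg1 n ε j k = ((((List.finRange n).drop j).take (k + 1 - j)).map
      fun i => Vtx.mid i false (ε i)) ++ seg2 n ε k := by
  rw [seg1, dif_pos ⟨Nat.lt_of_le_of_lt hj hk, hj⟩]
  rw [List.drop_eq_getElem_cons (by simpa using Nat.lt_of_le_of_lt hj hk), List.getElem_finRange]
  have h1 : k + 1 - j = (k + 1 - (j+1)) + 1 := by omega
  rw [h1, List.take_succ_cons, List.map_cons]
  by_cases h2 : j + 1 ≤ k
  · rw [seg1_eq n ε (j+1) k hk h2]
    rfl
  · have hjk : j = k := by omega
    rw [seg1, dif_neg (by omega)]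
    have : k + 1 - (j + 1) = 0 := by omega
    rw [this, List.take_zero]
    subst hjk
    simp
termination_by k + 1 - j
decreasing_by omega

theorem seg2_ne_nil (n : ℕ) (ε : Fin n → Bool) (j : ℕ) : seg2 n ε j ≠ [] := by
  rw [seg2]; split <;> simp

theorem seg1_ne_nil (n : ℕ) (ε : Fin n → Bool) (j k : ℕ) : seg1 n ε j k ≠ [] := by
  rw [seg1]; split
  · simp
  · exact seg2_ne_nil n ε k

theorem seg2_head (n : ℕ) (ε : Fin n → Bool) (j : ℕ) (h : j < n) :
    (seg2 n ε j).head? = some (Vtx.mid ⟨j, h⟩ true (ε ⟨j, h⟩)) := by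
  rw [seg2, dif_pos h]; rfl

theorem seg2_head' (n : ℕ) (ε : Fin n → Bool) (j : ℕ) (h : ¬ j < n) :
    (seg2 n ε j).head? = some Vtx.t := by
  rw [seg2, dif_neg h]; rfl

theorem seg1_head (n : ℕ) (ε : Fin n → Bool) (j k : ℕ) (h1 : j < n) (h2 : j ≤ k) :
    (seg1 n ε j k).head? = some (Vtx.mid ⟨j, h1⟩ false (ε ⟨j, h1⟩)) := by
  rw [seg1, dif_pos ⟨h1, h2⟩]; rfl

theorem seg2_chain (n : ℕ) (ε : Fin n → Bool) (j : ℕ) :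
    (seg2 n ε j).Chain' (GEdge n) := by
  rw [seg2]
  split
  · rename_i h
    refine List.isChain_cons.2 ⟨?_, seg2_chain n ε (j+1)⟩
    intro y hy
    by_cases h2 : j + 1 < n
    · rw [seg2_head n ε (j+1) h2] at hy
      cases hy
      simp [GEdge]
    · rw [seg2_head' n ε (j+1) h2] at hy
      cases hy
      show (j : ℕ) = n - 1
      omega
  · exact List.isChain_singleton _
termination_by n - j

theorem seg1_chain (n : ℕ) (ε : Fin n → Bool) (j k : ℕ) (hk : k < n) :
    (seg1 n ε j k).Chain' (GEdge n) := by
  rw [seg1]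
  split
  · rename_i h
    refine List.isChain_cons.2 ⟨?_, seg1_chain n ε (j+1) k hk⟩
    intro y hy
    by_cases h2 : j + 1 ≤ k
    · rw [seg1_head n ε (j+1) k (by omega) h2] at hy
      cases hy
      simp [GEdge]
    · have hjk : j = k := by omega
      rw [seg1, dif_neg (by omega), seg2_head n ε k (by omega)] at hy
      cases hy
      subst hjk
      exact ⟨rfl, rfl⟩
  · exact seg2_chain n ε k
termination_by k + 1 - j
decreasing_by omega

theorem seg2_last (n : ℕ) (ε : Fin n → Bool) (j : ℕ) :
    (seg2 n ε j).getLast? = some Vtx.t := by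
  rw [seg2]
  split
  · obtain ⟨y, l', hy⟩ := List.exists_cons_of_ne_nil (seg2_ne_nil n ε (j+1))
    have := seg2_last n ε (j+1)
    rw [hy] at this ⊢
    rw [List.getLast?_cons_cons]
    exact this
  · rfl
termination_by n - j

theorem seg1_last (n : ℕ) (ε : Fin n → Bool) (j k : ℕ) :
    (seg1 n ε j k).getLast? = some Vtx.t := by
  rw [seg1]
  split
  · obtain ⟨y, l', hy⟩ := List.exists_cons_of_ne_nil (seg1_ne_nil n ε (j+1) k)
    have := seg1_last n ε (j+1) k
    rw [hy] at this ⊢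
    rw [List.getLast?_cons_cons]
    exact this
  · exact seg2_last n ε k
termination_by k + 1 - j
decreasing_by omega

theorem mem_seg2 (n : ℕ) (ε : Fin n → Bool) (j : ℕ) {x : Vtx n} (hx : x ∈ seg2 n ε j) :
    x = Vtx.t ∨ ∃ i : Fin n, j ≤ i.val ∧ x = Vtx.mid i true (ε i) := by
  rw [seg2] at hx
  split at hx
  · rename_i h
    rcases List.mem_cons.1 hx with h1 | h1
    · exact Or.inr ⟨⟨j, h⟩, le_refl _, h1⟩
    · rcases mem_seg2 n ε (j+1) h1 with h2 | ⟨i, hi1, hi2⟩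
      · exact Or.inl h2
      · exact Or.inr ⟨i, by omega, hi2⟩
  · simp at hx
    exact Or.inl hx
termination_by n - j

theorem mem_seg1 (n : ℕ) (ε : Fin n → Bool) (j k : ℕ) {x : Vtx n} (hx : x ∈ seg1 n ε j k) :
    (∃ i : Fin n, j ≤ i.val ∧ i.val ≤ k ∧ x = Vtx.mid i false (ε i)) ∨ x ∈ seg2 n ε k := by
  rw [seg1] at hx
  split at hx
  · rename_i h
    rcases List.mem_cons.1 hx with h1 | h1
    · exact Or.inl ⟨⟨j, h.1⟩, le_refl _, h.2, h1⟩
    · rcases mem_seg1 n ε (j+1) k h1 with ⟨i, hi1, hi2, hi3⟩ | h2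
      · exact Or.inl ⟨i, by omega, hi2, hi3⟩
      · exact Or.inr h2
  · exact Or.inr hx
termination_by k + 1 - j
decreasing_by omega

theorem seg2_nodup (n : ℕ) (ε : Fin n → Bool) (j : ℕ) : (seg2 n ε j).Nodup := by
  rw [seg2]
  split
  · rename_i h
    refine List.nodup_cons.2 ⟨?_, seg2_nodup n ε (j+1)⟩
    intro hmem
    rcases mem_seg2 n ε (j+1) hmem with h1 | ⟨i, hi1, hi2⟩
    · exact absurd h1 (by simp)
    · rw [Vtx.mid.injEq] at hi2
      have h6 : j = (i : ℕ) := congrArg Fin.val hi2.1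
      omega
  · simp
termination_by n - j

theorem seg1_nodup (n : ℕ) (ε : Fin n → Bool) (j k : ℕ) : (seg1 n ε j k).Nodup := by
  rw [seg1]
  split
  · rename_i h
    refine List.nodup_cons.2 ⟨?_, seg1_nodup n ε (j+1) k⟩
    intro hmem
    rcases mem_seg1 n ε (j+1) k hmem with ⟨i, hi1, hi2, hi3⟩ | h2
    · rw [Vtx.mid.injEq] at hi3
      have h6 : j = (i : ℕ) := congrArg Fin.val hi3.1
      omega
    · rcases mem_seg2 n ε k h2 with h3 | ⟨i, hi1, hi2⟩ <;> simp_all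
  · exact seg2_nodup n ε k
termination_by k + 1 - j
decreasing_by omega

theorem s_not_mem_seg1 (n : ℕ) (ε : Fin n → Bool) (j k : ℕ) : Vtx.s ∉ seg1 n ε j k := by
  intro hmem
  rcases mem_seg1 n ε j k hmem with ⟨i, _, _, h⟩ | h2
  · simp at h
  · rcases mem_seg2 n ε k h2 with h3 | ⟨i, _, h⟩ <;> simp_all

theorem seg2_pos (n : ℕ) (ε : Fin n → Bool) (j : ℕ) (h : j < n) :
    seg2 n ε j = Vtx.mid ⟨j, h⟩ true (ε ⟨j, h⟩) :: seg2 n ε (j+1) := by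
  rw [seg2, dif_pos h]

theorem seg2_neg (n : ℕ) (ε : Fin n → Bool) (j : ℕ) (h : ¬ j < n) :
    seg2 n ε j = [Vtx.t] := by
  rw [seg2, dif_neg h]

theorem seg1_pos (n : ℕ) (ε : Fin n → Bool) (j k : ℕ) (h1 : j < n) (h2 : j ≤ k) :
    seg1 n ε j k = Vtx.mid ⟨j, h1⟩ false (ε ⟨j, h1⟩) :: seg1 n ε (j+1) k := by
  rw [seg1, dif_pos ⟨h1, h2⟩]

theorem seg1_neg (n : ℕ) (ε : Fin n → Bool) (j k : ℕ) (h : ¬ (j < n ∧ j ≤ k)) :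
    seg1 n ε j k = seg2 n ε k := by
  rw [seg1, dif_neg h]

theorem seg2_congr (n : ℕ) (ε ε' : Fin n → Bool) (j : ℕ)
    (hε : ∀ i : Fin n, j ≤ i.val → ε i = ε' i) : seg2 n ε j = seg2 n ε' j := by
  by_cases h : j < n
  · rw [seg2_pos n ε j h, seg2_pos n ε' j h, hε ⟨j, h⟩ (le_refl _),
      seg2_congr n ε ε' (j+1) (fun i hi => hε i (by omega))]
  · rw [seg2_neg n ε j h, seg2_neg n ε' j h]
termination_by n - j

theorem seg1_congr (n : ℕ) (ε ε' : Fin n → Bool) (j k : ℕ) (hjk : j ≤ k)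
    (hε : ∀ i : Fin n, j ≤ i.val → ε i = ε' i) : seg1 n ε j k = seg1 n ε' j k := by
  by_cases h : j < n
  · rw [seg1_pos n ε j k h hjk, seg1_pos n ε' j k h hjk, hε ⟨j, h⟩ (le_refl _)]
    by_cases h2 : j + 1 ≤ k
    · rw [seg1_congr n ε ε' (j+1) k h2 (fun i hi => hε i (by omega))]
    · rw [seg1_neg n ε (j+1) k (by omega), seg1_neg n ε' (j+1) k (by omega),
        seg2_congr n ε ε' k (fun i hi => hε i (by omega))]
  · rw [seg1_neg n ε j k (by omega), seg1_neg n ε' j k (by omega),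
      seg2_congr n ε ε' k (fun i hi => hε i (by omega))]
termination_by k + 1 - j
decreasing_by omega

theorem seg2_inj (n : ℕ) (ε ε' : Fin n → Bool) (j : ℕ)
    (h : seg2 n ε j = seg2 n ε' j) : ∀ i : Fin n, j ≤ i.val → ε i = ε' i := by
  intro i hi
  by_cases hj : j < n
  · rw [seg2_pos n ε j hj, seg2_pos n ε' j hj, List.cons.injEq, Vtx.mid.injEq] at h
    rcases Nat.eq_or_lt_of_le hi with heq | hlt
    · have : i = ⟨j, hj⟩ := Fin.ext heq.symm
      subst this
      exact h.1.2.2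
    · exact seg2_inj n ε ε' (j+1) h.2 i hlt
  · omega
termination_by n - j

theorem seg1_inj (n : ℕ) (ε ε' : Fin n → Bool) (j k k' : ℕ) (hjk : j ≤ k) (hjk' : j ≤ k')
    (hk : k < n) (hk' : k' < n) (h : seg1 n ε j k = seg1 n ε' j k') :
    k = k' ∧ ∀ i : Fin n, j ≤ i.val → ε i = ε' i := by
  have hjn : j < n := by omega
  rw [seg1_pos n ε j k hjn hjk, seg1_pos n ε' j k' hjn hjk',
    List.cons.injEq, Vtx.mid.injEq] at h
  have hεj : ε ⟨j, hjn⟩ = ε' ⟨j, hjn⟩ := h.1.2.2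
  have htl := h.2
  by_cases h2 : j + 1 ≤ k <;> by_cases h2' : j + 1 ≤ k'
  · obtain ⟨hkk, hrest⟩ := seg1_inj n ε ε' (j+1) k k' h2 h2' hk hk' htl
    refine ⟨hkk, fun i hi => ?_⟩
    rcases Nat.eq_or_lt_of_le hi with heq | hlt
    · have : i = ⟨j, hjn⟩ := Fin.ext heq.symm
      subst this
      exact hεj
    · exact hrest i hlt
  · exfalso
    rw [seg1_pos n ε (j+1) k (by omega) h2, seg1_neg n ε' (j+1) k' (by omega),
      seg2_pos n ε' k' (by omega), List.cons.injEq] at htl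
    exact absurd htl.1 (by simp)
  · exfalso
    rw [seg1_neg n ε (j+1) k (by omega), seg1_pos n ε' (j+1) k' (by omega) h2',
      seg2_pos n ε k (by omega), List.cons.injEq] at htl
    exact absurd htl.1 (by simp)
  · have hkk : k = k' := by omega
    subst hkk
    rw [seg1_neg n ε (j+1) k (by omega), seg1_neg n ε' (j+1) k (by omega)] at htl
    refine ⟨rfl, fun i hi => ?_⟩
    rcases Nat.eq_or_lt_of_le hi with heq | hlt
    · have : i = ⟨j, hjn⟩ := Fin.ext heq.symm
      subst this
      exact hεj
    · exact seg2_inj n ε ε' k htl i (by omega)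
termination_by k + 1 - j
decreasing_by omega

theorem isBridgeB_s (n : ℕ) (y : Vtx n) : isBridgeB n Vtx.s y = false := by
  cases y <;> rfl

theorem isBridgeB_true (n : ℕ) (i : Fin n) (v : Bool) (y : Vtx n) :
    isBridgeB n (Vtx.mid i true v) y = false := by
  cases y with
  | s => rfl
  | t => rfl
  | mid i' b w => cases b <;> rfl

theorem isBridgeB_ff (n : ℕ) (i i' : Fin n) (v w : Bool) :
    isBridgeB n (Vtx.mid i false v) (Vtx.mid i' false w) = false := rfl

theorem isBridgeB_ft (n : ℕ) (i i' : Fin n) (v w : Bool) :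
    isBridgeB n (Vtx.mid i false v) (Vtx.mid i' true w) = (i == i' && v == w) := rfl

theorem seg2_count (n : ℕ) (ε : Fin n → Bool) (j : ℕ) :
    (((seg2 n ε j).zip (seg2 n ε j).tail).countP fun q => isBridgeB n q.1 q.2) = 0 := by
  by_cases h : j < n
  · obtain ⟨y, l', hy⟩ := List.exists_cons_of_ne_nil (seg2_ne_nil n ε (j+1))
    have ih := seg2_count n ε (j+1)
    rw [seg2_pos n ε j h, hy]
    rw [hy] at ih
    simp only [List.zip_cons_cons, List.tail_cons, List.countP_cons] at ih ⊢
    rw [isBridgeB_true]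
    simpa using ih
  · rw [seg2_neg n ε j h]
    rfl
termination_by n - j

theorem seg1_count (n : ℕ) (ε : Fin n → Bool) (j k : ℕ) (hjk : j ≤ k) (hk : k < n) :
    (((seg1 n ε j k).zip (seg1 n ε j k).tail).countP fun q => isBridgeB n q.1 q.2) = 1 := by
  have hjn : j < n := by omega
  rw [seg1_pos n ε j k hjn hjk]
  by_cases h2 : j + 1 ≤ k
  · have ih := seg1_count n ε (j+1) k h2 hk
    rw [seg1_pos n ε (j+1) k (by omega) h2] at ih ⊢
    simp only [List.zip_cons_cons, List.tail_cons, List.countP_cons] at ih ⊢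
    rw [isBridgeB_ff]
    simpa using ih
  · rw [seg1_neg n ε (j+1) k (by omega), seg2_pos n ε k hk]
    have ih := seg2_count n ε k
    rw [seg2_pos n ε k hk] at ih
    obtain ⟨y, l', hy⟩ := List.exists_cons_of_ne_nil (seg2_ne_nil n ε (k+1))
    rw [hy] at ih ⊢
    simp only [List.zip_cons_cons, List.tail_cons, List.countP_cons] at ih ⊢
    have hjk2 : j = k := by omega
    subst hjk2
    rw [isBridgeB_ft]
    simp at ih ⊢
    exact ih
termination_by k + 1 - j
decreasing_by omega

theorem fwd2 (n : ℕ) (Q : List (Vtx n)) (hc : Q.Chain' (GEdge n)) (hl : Q.getLast? = some Vtx.t)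
    (j : ℕ) (h : j < n) (v : Bool) (hh : Q.head? = some (Vtx.mid ⟨j, h⟩ true v)) :
    ∃ ε : Fin n → Bool, ε ⟨j, h⟩ = v ∧ Q = seg2 n ε j := by
  match Q with
  | [] => simp at hh
  | [x] =>
    simp at hh hl
    rw [hh] at hl
    simp at hl
  | x :: y :: Q' =>
    have hx : x = Vtx.mid ⟨j, h⟩ true v := by simpa using hh
    subst hx
    have hedge : GEdge n (Vtx.mid ⟨j, h⟩ true v) y := (List.isChain_cons_cons.1 hc).1
    have hc' : (y :: Q').Chain' (GEdge n) := (List.isChain_cons_cons.1 hc).2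
    have hl' : (y :: Q').getLast? = some Vtx.t := by
      rw [List.getLast?_cons_cons] at hl
      exact hl
    cases y with
    | s => exact absurd hedge (by simp [GEdge])
    | t =>
      have hj : (j : ℕ) = n - 1 := hedge
      have hQ' : Q' = [] := by
        cases Q' with
        | nil => rfl
        | cons z Q'' =>
          have : GEdge n Vtx.t z := (List.isChain_cons_cons.1 hc').1
          exact absurd this (by cases z <;> simp [GEdge])
      subst hQ'
      refine ⟨fun _ => v, rfl, ?_⟩
      rw [seg2_pos n _ j h, seg2_neg n _ (j+1) (by omega)]
    | mid i' b w =>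
      cases b with
      | false => exact absurd hedge (by simp [GEdge])
      | true =>
        have hi' : (i' : ℕ) = j + 1 := hedge
        have hj1 : j + 1 < n := hi' ▸ i'.isLt
        have hi'2 : i' = ⟨j + 1, hj1⟩ := Fin.ext hi'
        subst hi'2
        obtain ⟨ε, hε, hQ'⟩ := fwd2 n (Vtx.mid ⟨j+1, hj1⟩ true w :: Q') hc' hl' (j+1) hj1 w rfl
        refine ⟨Function.update ε ⟨j, h⟩ v, Function.update_self _ _ _, ?_⟩
        rw [seg2_pos n _ j h, Function.update_self]
        congr 1
        rw [hQ']
        apply seg2_congr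
        intro i hi
        rw [Function.update_of_ne]
        intro hcon
        rw [hcon] at hi
        simp at hi

theorem fwd1 (n : ℕ) (Q : List (Vtx n)) (hc : Q.Chain' (GEdge n)) (hl : Q.getLast? = some Vtx.t)
    (j : ℕ) (h : j < n) (v : Bool) (hh : Q.head? = some (Vtx.mid ⟨j, h⟩ false v)) :
    ∃ (k : ℕ) (hk : k < n) (ε : Fin n → Bool), j ≤ k ∧ Q = seg1 n ε j k := by
  match Q with
  | [] => simp at hh
  | [x] =>
    simp at hh hl
    rw [hh] at hl
    simp at hl
  | x :: y :: Q' =>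
    have hx : x = Vtx.mid ⟨j, h⟩ false v := by simpa using hh
    subst hx
    have hedge : GEdge n (Vtx.mid ⟨j, h⟩ false v) y := (List.isChain_cons_cons.1 hc).1
    have hc' : (y :: Q').Chain' (GEdge n) := (List.isChain_cons_cons.1 hc).2
    have hl' : (y :: Q').getLast? = some Vtx.t := by
      rw [List.getLast?_cons_cons] at hl
      exact hl
    cases y with
    | s => exact absurd hedge (by simp [GEdge])
    | t => exact absurd hedge (by simp [GEdge])
    | mid i' b w =>
      cases b with
      | true =>
        obtain ⟨hi', hw⟩ : i' = ⟨j, h⟩ ∧ w = v := hedge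
        subst hi'
        subst hw
        obtain ⟨ε, hε, hQ'⟩ := fwd2 n (Vtx.mid ⟨j, h⟩ true w :: Q') hc' hl' j h w rfl
        refine ⟨j, h, ε, le_refl _, ?_⟩
        rw [seg1_pos n ε j j h (le_refl _), seg1_neg n ε (j+1) j (by omega), hε, hQ']
      | false =>
        have hi' : (i' : ℕ) = j + 1 := hedge
        have hj1 : j + 1 < n := hi' ▸ i'.isLt
        have hi'2 : i' = ⟨j + 1, hj1⟩ := Fin.ext hi'
        subst hi'2
        obtain ⟨k, hk, ε, hjk, hQ'⟩ :=
          fwd1 n (Vtx.mid ⟨j+1, hj1⟩ false w :: Q') hc' hl' (j+1) hj1 w rfl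
        refine ⟨k, hk, Function.update ε ⟨j, h⟩ v, by omega, ?_⟩
        rw [seg1_pos n _ j k h (by omega), Function.update_self]
        congr 1
        rw [hQ']
        apply seg1_congr n _ _ _ _ hjk
        intro i hi
        rw [Function.update_of_ne]
        intro hcon
        rw [hcon] at hi
        simp at hi
theorem filter_le_eq_drop (n j : ℕ) :
    ((List.finRange n).filter fun i => decide (j ≤ i.val)) = (List.finRange n).drop j := by
  induction n generalizing j with
  | zero => simp [List.finRange]
  | succ n ih =>
    rw [List.finRange_succ]
    cases j with
    | zero => simp
    | succ j =>
      rw [List.drop_succ_cons, List.filter_cons, if_neg (by simp)]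
      rw [List.filter_map, ← List.map_drop, ← ih j]
      congr 1
      apply List.filter_congr
      intro a _
      simp [Fin.val_succ]

theorem filter_le_eq_take (n k : ℕ) :
    ((List.finRange n).filter fun i => decide (i.val ≤ k)) = (List.finRange n).take (k+1) := by
  induction n generalizing k with
  | zero => simp [List.finRange]
  | succ n ih =>
    rw [List.finRange_succ, List.take_succ_cons, List.filter_cons, if_pos (by simp)]
    rw [List.filter_map]
    cases k with
    | zero =>
      rw [List.take_zero]
      simp
    | succ k =>
      rw [← List.map_take, ← ih k]
      congr 2
      apply List.filter_congr
      intro a _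
      simp [Fin.val_succ]

theorem pathOf_eq (n : ℕ) (k : Fin n) (ε : Fin n → Bool) :
    pathOf n k ε = Vtx.s :: seg1 n ε 0 k.val := by
  rw [pathOf, seg1_eq n ε 0 k.val k.isLt (Nat.zero_le _), seg2_eq n ε k.val,
    filter_le_eq_take, filter_le_eq_drop]
  simp

theorem bw (n : ℕ) (hn : 1 ≤ n) (k : Fin n) (ε : Fin n → Bool) :
    isSTPath n (pathOf n k ε) := by
  rw [pathOf_eq]
  refine ⟨?_, ?_, rfl, ?_⟩
  · refine List.isChain_cons.2 ⟨?_, seg1_chain n ε 0 k.val k.isLt⟩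
    intro y hy
    rw [seg1_head n ε 0 k.val (by omega) (Nat.zero_le _)] at hy
    cases hy
    show ((⟨0, by omega⟩ : Fin n) : ℕ) = 0
    rfl
  · exact List.nodup_cons.2 ⟨s_not_mem_seg1 n ε 0 k.val, seg1_nodup n ε 0 k.val⟩
  · obtain ⟨y, l', hy⟩ := List.exists_cons_of_ne_nil (seg1_ne_nil n ε 0 k.val)
    rw [hy, List.getLast?_cons_cons, ← hy]
    exact seg1_last n ε 0 k.val

theorem fw (n : ℕ) (hn : 1 ≤ n) (P : List (Vtx n)) (hP : isSTPath n P) :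
    ∃ (k : Fin n) (ε : Fin n → Bool), P = pathOf n k ε := by
  obtain ⟨hc, hnd, hh, hl⟩ := hP
  cases P with
  | nil => simp at hh
  | cons x Q =>
    have hx : x = Vtx.s := by simpa using hh
    subst hx
    cases Q with
    | nil => simp at hl
    | cons y Q' =>
      have hedge : GEdge n Vtx.s y := (List.isChain_cons_cons.1 hc).1
      have hc' := (List.isChain_cons_cons.1 hc).2
      have hl' : (y :: Q').getLast? = some Vtx.t := by
        rw [List.getLast?_cons_cons] at hl
        exact hl
      cases y with
      | s => exact absurd hedge (by simp [GEdge])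
      | t => exact absurd hedge (by simp [GEdge])
      | mid i b v =>
        cases b with
        | true => exact absurd hedge (by simp [GEdge])
        | false =>
          have h0 : (0 : ℕ) < n := hn
          have hi : i = ⟨0, h0⟩ := Fin.ext hedge
          subst hi
          obtain ⟨k, hk, ε, -, hQ⟩ :=
            fwd1 n (Vtx.mid ⟨0, h0⟩ false v :: Q') hc' hl' 0 h0 v rfl
          exact ⟨⟨k, hk⟩, ε, by rw [pathOf_eq, hQ]⟩

end StAux

/-- A sequence of vertices is a directed `s`-`t` path in `G_φ` iff it equals
`pathOf n k ε` for some bridge position `k ∈ {1,…,n}` and some `ε : {1,…,n} → {t,f}`;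
this correspondence is a bijection (the map `(k,ε) ↦ pathOf n k ε` is injective and its
range is exactly the set of directed `s`-`t` paths); in particular every directed
`s`-`t` path contains exactly one bridge edge. -/
theorem stmt5 (n : ℕ) (hn : 1 ≤ n) :
    (∀ P : List (Vtx n), isSTPath n P ↔ ∃ (k : Fin n) (ε : Fin n → Bool), P = pathOf n k ε) ∧
    (Function.Injective fun p : Fin n × (Fin n → Bool) => pathOf n p.1 p.2) ∧
    (∀ P : List (Vtx n), isSTPath n P →
      ((P.zip P.tail).countP fun q => isBridgeB n q.1 q.2) = 1) := by
  refine ⟨fun P => ⟨StAux.fw n hn P, ?_⟩, ?_, ?_⟩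
  · rintro ⟨k, ε, rfl⟩
    exact StAux.bw n hn k ε
  · rintro ⟨k, ε⟩ ⟨k', ε'⟩ hpq
    simp only at hpq
    rw [StAux.pathOf_eq, StAux.pathOf_eq, List.cons.injEq] at hpq
    obtain ⟨hk, hε⟩ := StAux.seg1_inj n ε ε' 0 k.val k'.val (Nat.zero_le _) (Nat.zero_le _)
      k.isLt k'.isLt hpq.2
    exact Prod.ext (Fin.ext hk) (funext fun i => hε i (Nat.zero_le _))
  · intro P hP
    obtain ⟨k, ε, rfl⟩ := StAux.fw n hn P hP
    rw [StAux.pathOf_eq]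
    obtain ⟨y, l', hy⟩ := List.exists_cons_of_ne_nil (StAux.seg1_ne_nil n ε 0 k.val)
    have hcnt := StAux.seg1_count n ε 0 k.val (Nat.zero_le _) k.isLt
    rw [hy] at hcnt ⊢
    simp only [List.zip_cons_cons, List.tail_cons, List.countP_cons] at hcnt ⊢
    rw [StAux.isBridgeB_s]
    simpa using hcnt
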